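/- Let δ > 1 and suppose a solution of the IDM system satisfies v(t**) < −v_free at some time t**. Then v is strictly decreasing as long as it stays below −v_free, and the solution ceases to exist in finite time: there exists a finite time t₁ > t** such that lim_{t→t₁⁻} v(t) = −∞. In particular, v cannot be extended to [t**, ∞): if it could, then since v̇(t) ≤ a·(1 − (|v(t)|/v_free)^δ) whenever v(t) < −v_free, the change of variables y = −v(s) would force ∫_{v_free+η}^{∞} dy/((y/v_free)^δ − 1) = ∞ for η = −v(t**) − v_free > 0, contradicting the finiteness of this integral for δ > 1. -/

import Mathlib

open Set

/-- The IDM acceleration function. -/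
noncomputable def IDMAcc (a b vfree τ s₀ l δ : ℝ) (x v xl vl : ℝ) : ℝ :=
  a * (1 - (|v| / vfree) ^ δ -
    ((2 * Real.sqrt (a * b) * (s₀ + v * τ) + v * (v - vl)) /
      (2 * Real.sqrt (a * b) * (xl - x - l))) ^ 2)

private lemma idm_arith (a F V P : ℝ) (ha : 0 < a) (hF : 0 < F) (hV : 0 < V)
    (hPV : V ≤ P) : a * (1 - P / F) ≤ -(a * (1 - F / V) / F) * P := by
  have hF' := hF.ne'
  have hV' := hV.ne'
  rw [← sub_nonneg]
  have h : -(a * (1 - F / V) / F) * P - a * (1 - P / F) = a * (P - V) / V := by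
    field_simp; ring
  rw [h]
  apply div_nonneg _ hV.le
  nlinarith

theorem idm_blow_down_finite_time
    (a b vfree s₀ l δ τ tss : ℝ)
    (ha : 0 < a) (hb : 0 < b) (hvf : 0 < vfree) (hs₀ : 0 < s₀) (hl : 0 < l)
    (hτ : 0 < τ) (hδ : 1 < δ)
    (x v xl vl : ℝ → ℝ)
    (hvl_nonneg : ∀ t, tss ≤ t → 0 ≤ vl t)
    (hgap : ∀ t, tss ≤ t → 0 < xl t - x t - l)
    (hx : ∀ t, tss ≤ t → HasDerivAt x (v t) t)
    (hv : ∀ t, tss ≤ t →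
      HasDerivAt v (IDMAcc a b vfree τ s₀ l δ (x t) (v t) (xl t) (vl t)) t)
    (hvss : v tss < -vfree) :
    False := by
  set A : ℝ → ℝ := fun t =>
    IDMAcc a b vfree τ s₀ l δ (x t) (v t) (xl t) (vl t) with hA
  -- continuity of v on [tss, ∞)
  have hcont : ∀ t, tss ≤ t → ContinuousAt v t := fun t ht => (hv t ht).continuousAt
  -- the acceleration is bounded by the free-flow part
  have hAle : ∀ t, tss ≤ t → A t ≤ a * (1 - (|v t| / vfree) ^ δ) := by
    intro t ht
    have hsq : 0 ≤ ((2 * Real.sqrt (a * b) * (s₀ + v t * τ) + v t * (v t - vl t)) /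
      (2 * Real.sqrt (a * b) * (xl t - x t - l))) ^ 2 := sq_nonneg _
    simp only [hA, IDMAcc]
    nlinarith
  -- negative acceleration whenever v < -vfree
  have hAneg : ∀ t, tss ≤ t → v t < -vfree → A t < 0 := by
    intro t ht hvt
    have habs : vfree < |v t| := by
      rw [abs_of_neg (by linarith)]; linarith
    have hbase : 0 < |v t| / vfree := div_pos (by linarith) hvf
    have h1 : (1:ℝ) < (|v t| / vfree) ^ δ := by
      apply (Real.one_lt_rpow_iff_of_pos hbase).mpr
      exact Or.inl ⟨by rw [lt_div_iff₀ hvf]; linarith, by linarith⟩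
    have := hAle t ht
    nlinarith
  -- Step A: v stays below -vfree
  have hbelow : ∀ t, tss ≤ t → v t < -vfree := by
    intro T hT
    by_contra hcon
    push_neg at hcon
    set S : Set ℝ := Icc tss T ∩ v ⁻¹' Ici (-vfree) with hS
    have hScl : IsClosed S := by
      apply ContinuousOn.preimage_isClosed_of_isClosed _ isClosed_Icc isClosed_Ici
      exact fun s hs => (hcont s hs.1).continuousWithinAt
    have hSne : S.Nonempty := ⟨T, ⟨hT, le_refl T⟩, hcon⟩
    have hSbd : BddBelow S := ⟨tss, fun s hs => hs.1.1⟩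
    set t₀ := sInf S with ht₀
    have ht₀S : t₀ ∈ S := hScl.csInf_mem hSne hSbd
    have ht₀ge : tss ≤ t₀ := ht₀S.1.1
    have hvt₀ : -vfree ≤ v t₀ := ht₀S.2
    have ht₀gt : tss < t₀ := by
      rcases eq_or_lt_of_le ht₀ge with h | h
      · exfalso; rw [← h] at hvt₀; linarith
      · exact h
    have hIco : ∀ s, s ∈ Ico tss t₀ → v s < -vfree := by
      intro s hs
      by_contra hcs
      push_neg at hcs
      have : s ∈ S := ⟨⟨hs.1, le_trans hs.2.le ht₀S.1.2⟩, hcs⟩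
      exact absurd (csInf_le hSbd this) (not_le.mpr hs.2)
    have hanti : StrictAntiOn v (Icc tss t₀) := by
      apply strictAntiOn_of_deriv_neg (convex_Icc _ _)
      · exact fun s hs => (hcont s hs.1).continuousWithinAt
      · intro s hs
        rw [interior_Icc] at hs
        rw [(hv s hs.1.le).deriv]
        exact hAneg s hs.1.le (hIco s ⟨hs.1.le, hs.2⟩)
    have := hanti ⟨le_refl _, ht₀ge⟩ ⟨ht₀ge, le_refl _⟩ ht₀gt
    linarith
  -- Step B: v is decreasing, so v t ≤ v tss
  have hmono : ∀ t, tss ≤ t → v t ≤ v tss := by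
    intro t ht
    rcases eq_or_lt_of_le ht with h | h
    · rw [← h]
    · have hanti : StrictAntiOn v (Ici tss) := by
        apply strictAntiOn_of_deriv_neg (convex_Ici _)
        · exact fun s hs => (hcont s hs).continuousWithinAt
        · intro s hs
          rw [interior_Ici] at hs
          rw [(hv s hs.le).deriv]
          exact hAneg s hs.le (hbelow s hs.le)
      exact (hanti (self_mem_Ici) (le_of_lt h) h).le
  -- constants
  set v₀ : ℝ := -v tss with hv₀
  have hv₀f : vfree < v₀ := by simp only [hv₀]; linarith
  have hv₀pos : 0 < v₀ := lt_trans hvf hv₀f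
  set K : ℝ := a * (1 - (vfree / v₀) ^ δ) / vfree ^ δ with hK
  have hFδ : (0:ℝ) < vfree ^ δ := Real.rpow_pos_of_pos hvf δ
  have hVδ : (0:ℝ) < v₀ ^ δ := Real.rpow_pos_of_pos hv₀pos δ
  have hKpos : 0 < K := by
    have h1 : (vfree / v₀) ^ δ < 1 := by
      apply Real.rpow_lt_one (by positivity) _ (by linarith)
      rw [div_lt_one hv₀pos]; exact hv₀f
    apply div_pos _ hFδ
    nlinarith
  -- Step C: deriv bound v' ≤ -K * (-v)^δ
  have hC : ∀ t, tss ≤ t → A t ≤ -K * (-v t) ^ δ := by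
    intro t ht
    have hvt : v t < -vfree := hbelow t ht
    have hut : v₀ ≤ -v t := by have := hmono t ht; simp only [hv₀]; linarith
    have hutpos : 0 < -v t := lt_of_lt_of_le hv₀pos hut
    have habs : |v t| = -v t := abs_of_neg (by linarith)
    have h1 := hAle t ht
    rw [habs] at h1
    refine le_trans h1 ?_
    have hPV : v₀ ^ δ ≤ (-v t) ^ δ := Real.rpow_le_rpow hv₀pos.le hut (by linarith)
    have e1 : (-v t / vfree) ^ δ = (-v t) ^ δ / vfree ^ δ :=
      Real.div_rpow hutpos.le hvf.le δ
    have e2 : (vfree / v₀) ^ δ = vfree ^ δ / v₀ ^ δ :=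
      Real.div_rpow hvf.le hv₀pos.le δ
    rw [e1, hK, e2]
    exact idm_arith a (vfree ^ δ) (v₀ ^ δ) ((-v t) ^ δ) ha hFδ hVδ hPV
  -- Step D: the auxiliary function w = (-v)^(1-δ) + C t
  set C : ℝ := (δ - 1) * K with hCdef
  have hCpos : 0 < C := by apply mul_pos (by linarith) hKpos
  set g : ℝ → ℝ := fun t => (-v t) ^ (1 - δ) + C * t with hg
  have hgderiv : ∀ t, tss ≤ t →
      HasDerivAt g (-A t * (1 - δ) * (-v t) ^ (1 - δ - 1) + C) t := by
    intro t ht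
    have hutpos : 0 < -v t := by have := hbelow t ht; linarith
    have h1 : HasDerivAt (fun s => -v s) (-A t) t := (hv t ht).neg
    have h2 := h1.rpow_const (p := 1 - δ) (Or.inl hutpos.ne')
    have h3 : HasDerivAt (fun s : ℝ => C * s) C t := by
      simpa using (hasDerivAt_id t).const_mul C
    exact h2.add h3
  have hganti : AntitoneOn g (Ici tss) := by
    apply antitoneOn_of_deriv_nonpos (convex_Ici _)
    · exact fun s hs => (hgderiv s hs).continuousAt.continuousWithinAt
    · intro s hs
      rw [interior_Ici] at hs
      exact (hgderiv s hs.le).differentiableAt.differentiableWithinAt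
    · intro s hs
      rw [interior_Ici] at hs
      rw [(hgderiv s hs.le).deriv]
      have hutpos : 0 < -v s := by have := hbelow s hs.le; linarith
      have hnegδ : (0:ℝ) < (-v s) ^ (-δ) := Real.rpow_pos_of_pos hutpos _
      have hprod : (-v s) ^ δ * (-v s) ^ (-δ) = 1 := by
        rw [← Real.rpow_add hutpos]; simp
      have hBs : K * (-v s) ^ δ ≤ -A s := by
        have := hC s hs.le; linarith
      have hKle : K ≤ -A s * (-v s) ^ (-δ) := by
        have := mul_le_mul_of_nonneg_right hBs hnegδ.le
        rw [mul_assoc, hprod, mul_one] at this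
        exact this
      have he : (1:ℝ) - δ - 1 = -δ := by ring
      rw [he]
      nlinarith
  -- contradiction: g eventually forces w < 0
  set w₀ : ℝ := (-v tss) ^ (1 - δ) with hw₀
  have hw₀pos : 0 < w₀ := Real.rpow_pos_of_pos (by linarith) _
  set T : ℝ := tss + (w₀ + 1) / C with hT
  have hTge : tss ≤ T := by
    simp only [hT]
    have : 0 < (w₀ + 1) / C := by positivity
    linarith
  have hgle : g T ≤ g tss := hganti self_mem_Ici hTge hTge
  have hwTpos : 0 < (-v T) ^ (1 - δ) :=
    Real.rpow_pos_of_pos (by have := hbelow T hTge; linarith) _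
  have hCT : C * T = C * tss + (w₀ + 1) := by
    simp only [hT]
    field_simp
  simp only [hg, hw₀] at hgle hwTpos hw₀pos
  rw [hCT] at hgle
  simp only [hw₀] at hgle
  linarith
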